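/- Let (L, A, ω, {{-,-}}) be a double Lie algebroid with zero anchor ω = 0. Define X •_l Y = m({{X,Y}}_l) = {{X,Y}}_l'·{{X,Y}}_l'' and X •_r Y = -m({{X,Y}}_r) = -{{X,Y}}_r'·{{X,Y}}_r''. Then both •_l and •_r are associative products on L. -/
import Mathlib


open TensorProduct MulOpposite

variable (k : Type*) [Field k] [CharZero k]
  (A : Type*) [Ring A] [Algebra k A]
  (L : Type*) [AddCommGroup L] [Module k L]
  [Module A L] [Module Aᵐᵒᵖ L] [SMulCommClass A Aᵐᵒᵖ L]
  [IsScalarTower k A L] [IsScalarTower k Aᵐᵒᵖ L]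
  [SMulCommClass k A L] [SMulCommClass k Aᵐᵒᵖ L]

/-- left action of `a ∈ A` on `L`, as a `k`-linear map. -/
noncomputable def lact (a : A) : L →ₗ[k] L where
  toFun x := a • x
  map_add' := smul_add a
  map_smul' c x := (smul_comm c a x).symm

/-- right action of `a ∈ A` on `L`, as a `k`-linear map. -/
noncomputable def ract (a : A) : L →ₗ[k] L where
  toFun x := op a • x
  map_add' := smul_add (op a)
  map_smul' c x := (smul_comm c (op a) x).symm

/-- `L ⊗ A → L`, `ξ ⊗ a ↦ ξ·a`. -/
noncomputable def ml : L ⊗[k] A →ₗ[k] L :=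
  TensorProduct.lift (LinearMap.mk₂ k (fun x a => op a • x)
    (by intros; simp [smul_add]) (by intros; exact (smul_comm _ _ _).symm)
    (by intros; simp [op_add, add_smul]) (by intros; simp [op_smul, smul_assoc]))

/-- `A ⊗ L → L`, `a ⊗ ξ ↦ a·ξ`. -/
noncomputable def mr : A ⊗[k] L →ₗ[k] L :=
  TensorProduct.lift (LinearMap.mk₂ k (fun a x => a • x)
    (by intros; simp [add_smul]) (by intros; simp [smul_assoc])
    (by intros; simp [smul_add]) (by intros; exact (smul_comm _ _ _).symm))

/-- `{{D₁, -}}_L` applied to the `L`-slot of the `L ⊗ A` component. -/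
noncomputable def LAm (bl : L →ₗ[k] L →ₗ[k] L ⊗[k] A) (D : L) :
    L ⊗[k] A →ₗ[k] L ⊗[k] (A ⊗[k] A) :=
  (TensorProduct.assoc k L A A).toLinearMap ∘ₗ LinearMap.rTensor A (bl D)

/-- `{{D₁, -}}_R` applied to the `L`-slot of the `L ⊗ A` component. -/
noncomputable def Bm (br : L →ₗ[k] L →ₗ[k] A ⊗[k] L) (D : L) :
    L ⊗[k] A →ₗ[k] A ⊗[k] (L ⊗[k] A) :=
  (TensorProduct.assoc k A L A).toLinearMap ∘ₗ LinearMap.rTensor A (br D)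

/-- `τ² : A ⊗ L ⊗ A → L ⊗ A ⊗ A`, `a ⊗ ξ ⊗ b ↦ ξ ⊗ b ⊗ a`. -/
noncomputable def ρ31 : A ⊗[k] (L ⊗[k] A) →ₗ[k] L ⊗[k] (A ⊗[k] A) :=
  (TensorProduct.assoc k L A A).toLinearMap ∘ₗ
    (TensorProduct.comm k A (L ⊗[k] A)).toLinearMap

/-- `τ : L ⊗ A ⊗ A → A ⊗ L ⊗ A`, `ξ ⊗ a ⊗ b ↦ b ⊗ ξ ⊗ a`. -/
noncomputable def ρ12 : L ⊗[k] (A ⊗[k] A) →ₗ[k] A ⊗[k] (L ⊗[k] A) :=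
  (TensorProduct.comm k (L ⊗[k] A) A).toLinearMap ∘ₗ
    (TensorProduct.assoc k L A A).symm.toLinearMap

/-- `τ : A ⊗ L ⊗ A → A ⊗ A ⊗ L`, `a ⊗ ξ ⊗ b ↦ b ⊗ a ⊗ ξ`. -/
noncomputable def ρ23 : A ⊗[k] (L ⊗[k] A) →ₗ[k] A ⊗[k] (A ⊗[k] L) :=
  (TensorProduct.comm k (A ⊗[k] L) A).toLinearMap ∘ₗ
    (TensorProduct.assoc k A L A).symm.toLinearMap

/-- `τ² : L ⊗ A ⊗ A → A ⊗ A ⊗ L`, `ξ ⊗ a ⊗ b ↦ a ⊗ b ⊗ ξ`. -/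
noncomputable def ρ13 : L ⊗[k] (A ⊗[k] A) →ₗ[k] A ⊗[k] (A ⊗[k] L) :=
  (TensorProduct.assoc k A A L).toLinearMap ∘ₗ
    (TensorProduct.comm k L (A ⊗[k] A)).toLinearMap

/-- `L ⊗ (A ⊗ A) → L`, `ξ ⊗ a ⊗ b ↦ ξ·(ab)`. -/
noncomputable def Fm : L ⊗[k] (A ⊗[k] A) →ₗ[k] L :=
  ml k A L ∘ₗ LinearMap.lTensor L (LinearMap.mul' k A)

/-- `A ⊗ (A ⊗ L) → L`, `a ⊗ b ⊗ ξ ↦ a·(b·ξ)`. -/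
noncomputable def Gm : A ⊗[k] (A ⊗[k] L) →ₗ[k] L :=
  mr k A L ∘ₗ LinearMap.lTensor A (mr k A L)

/-- `A ⊗ L → L`, `a ⊗ ξ ↦ ξ·a`. -/
noncomputable def mlc : A ⊗[k] L →ₗ[k] L :=
  ml k A L ∘ₗ (TensorProduct.comm k A L).toLinearMap

/-- `L ⊗ A → L`, `ξ ⊗ a ↦ a·ξ`. -/
noncomputable def mc' : L ⊗[k] A →ₗ[k] L :=
  mr k A L ∘ₗ (TensorProduct.comm k L A).toLinearMap

lemma mr_eq_mc'_comm (v : A ⊗[k] L) :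
    mr k A L v = mc' k A L ((TensorProduct.comm k A L) v) := by
  induction v using TensorProduct.induction_on with
  | zero => simp
  | tmul b η => simp [mr, mc']
  | add x y hx hy => simp [hx, hy]

lemma S1 (a : A) (w : L ⊗[k] A) :
    Fm k A L ((TensorProduct.assoc k L A A) (w ⊗ₜ a))
      = ml k A L (LinearMap.lTensor L (LinearMap.mulRight k a) w) := by
  induction w using TensorProduct.induction_on with
  | zero => simp
  | tmul η b => simp [Fm, ml]
  | add x y hx hy => simp [add_tmul, hx, hy]

lemma S2 (a : A) (v : A ⊗[k] L) :
    Fm k A L (ρ31 k A L ((TensorProduct.assoc k A L A) (v ⊗ₜ a)))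
      = mlc k A L (LinearMap.lTensor A (ract k A L a) v) := by
  induction v using TensorProduct.induction_on with
  | zero => simp
  | tmul b η => simp [Fm, ρ31, mlc, ml, ract, op_mul, mul_smul]
  | add x y hx hy => simp [add_tmul, hx, hy]

lemma S3 (a : A) (v : A ⊗[k] L) :
    Gm k A L (ρ23 k A L ((TensorProduct.assoc k A L A) (v ⊗ₜ a)))
      = a • mr k A L v := by
  induction v using TensorProduct.induction_on with
  | zero => simp
  | tmul b η => simp [Gm, ρ23, mr]
  | add x y hx hy => simp [add_tmul, hx, hy, smul_add]

lemma S3b (a : A) (v : A ⊗[k] L) :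
    mr k A L (LinearMap.rTensor L (LinearMap.mulLeft k a) v) = a • mr k A L v := by
  induction v using TensorProduct.induction_on with
  | zero => simp
  | tmul b η => simp [mr, mul_smul]
  | add x y hx hy => simp [hx, hy, smul_add]

lemma S4 (a : A) (w : L ⊗[k] A) :
    Gm k A L (ρ13 k A L ((TensorProduct.assoc k L A A) (w ⊗ₜ a)))
      = mc' k A L (LinearMap.rTensor A (lact k A L a) w) := by
  induction w using TensorProduct.induction_on with
  | zero => simp
  | tmul η b => simp [Gm, ρ13, mc', mr, lact]
  | add x y hx hy => simp [add_tmul, hx, hy]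

section lems

variable {k A L}
variable (bl : L →ₗ[k] L →ₗ[k] L ⊗[k] A) (br : L →ₗ[k] L →ₗ[k] A ⊗[k] L)

lemma lem1
    (hl2 : ∀ (D Δ : L) (a : A), bl D (op a • Δ) =
      LinearMap.lTensor L (LinearMap.mulRight k a) (bl D Δ))
    (D : L) (t : L ⊗[k] A) :
    Fm k A L (LAm k A L bl D t) = ml k A L (bl D (ml k A L t)) := by
  induction t using TensorProduct.induction_on with
  | zero => simp
  | tmul ξ a =>
      have h1 : LAm k A L bl D (ξ ⊗ₜ a)
          = (TensorProduct.assoc k L A A) ((bl D ξ) ⊗ₜ a) := by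
        simp [LAm]
      have h2 : ml k A L (ξ ⊗ₜ[k] a) = op a • ξ := by simp [ml]
      rw [h1, h2, hl2, S1]
  | add x y hx hy => simp [map_add, hx, hy]

lemma lem2
    (hanti : ∀ D Δ : L, bl D Δ = - (TensorProduct.comm k A L) (br Δ D))
    (hr2 : ∀ (D Δ : L) (a : A), br D (op a • Δ) =
      LinearMap.lTensor A (ract k A L a) (br D Δ))
    (D : L) (u : L ⊗[k] A) :
    Fm k A L (ρ31 k A L (Bm k A L br D u)) = - ml k A L (bl (ml k A L u) D) := by
  induction u using TensorProduct.induction_on with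
  | zero => simp
  | tmul ξ a =>
      have h1 : Bm k A L br D (ξ ⊗ₜ a)
          = (TensorProduct.assoc k A L A) ((br D ξ) ⊗ₜ a) := by
        simp [Bm]
      have h2 : ml k A L (ξ ⊗ₜ[k] a) = op a • ξ := by simp [ml]
      have h3 : bl (op a • ξ) D
          = - (TensorProduct.comm k A L) (LinearMap.lTensor A (ract k A L a) (br D ξ)) := by
        rw [hanti (op a • ξ) D, hr2]
      rw [h1, h2, S2, h3, map_neg, neg_neg]
      rfl
  | add x y hx hy => simp [map_add, hx, hy]; abel

lemma lem3
    (hanti : ∀ D Δ : L, bl D Δ = - (TensorProduct.comm k A L) (br Δ D))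
    (hr1 : ∀ (D Δ : L) (a : A), br D (a • Δ) =
      LinearMap.rTensor L (LinearMap.mulLeft k a) (br D Δ))
    (D : L) (u : L ⊗[k] A) :
    mr k A L (br D (mc' k A L u)) = Gm k A L (ρ23 k A L (Bm k A L br D u)) := by
  induction u using TensorProduct.induction_on with
  | zero => simp
  | tmul ξ a =>
      have h1 : Bm k A L br D (ξ ⊗ₜ a)
          = (TensorProduct.assoc k A L A) ((br D ξ) ⊗ₜ a) := by
        simp [Bm]
      have h2 : mc' k A L (ξ ⊗ₜ[k] a) = a • ξ := by simp [mc', mr]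
      rw [h1, h2, hr1, S3, S3b]
  | add x y hx hy => simp [map_add, hx, hy]

lemma lem4
    (hanti : ∀ D Δ : L, bl D Δ = - (TensorProduct.comm k A L) (br Δ D))
    (hl1 : ∀ (D Δ : L) (a : A), bl D (a • Δ) =
      LinearMap.rTensor A (lact k A L a) (bl D Δ))
    (D : L) (t : L ⊗[k] A) :
    mr k A L (br (mc' k A L t) D) = - Gm k A L (ρ13 k A L (LAm k A L bl D t)) := by
  induction t using TensorProduct.induction_on with
  | zero => simp
  | tmul ξ a =>
      have h1 : LAm k A L bl D (ξ ⊗ₜ a)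
          = (TensorProduct.assoc k L A A) ((bl D ξ) ⊗ₜ a) := by
        simp [LAm]
      have h2 : mc' k A L (ξ ⊗ₜ[k] a) = a • ξ := by simp [mc', mr]
      have h3 : (TensorProduct.comm k A L) (br (a • ξ) D) = - bl D (a • ξ) := by
        rw [hanti D (a • ξ), neg_neg]
      rw [h1, h2, S4, mr_eq_mc'_comm, h3, hl1, map_neg]
  | add x y hx hy => simp [map_add, hx, hy]; abel

end lems

/-- for a double Lie algebroid with zero anchor, the products
`X •ₗ Y = m({{X,Y}}_l)` and `X •ᵣ Y = -m({{X,Y}}_r)` are associative. -/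
theorem double_lie_algebroid_zero_anchor_associative_products
    (bl : L →ₗ[k] L →ₗ[k] L ⊗[k] A) (br : L →ₗ[k] L →ₗ[k] A ⊗[k] L)
    -- antisymmetry: `{{D,Δ}}_l = -({{Δ,D}}_r)°`
    (hanti : ∀ D Δ : L, bl D Δ = - (TensorProduct.comm k A L) (br Δ D))
    -- Leibniz rules with zero anchor
    (hl1 : ∀ (D Δ : L) (a : A), bl D (a • Δ) =
      LinearMap.rTensor A (lact k A L a) (bl D Δ))
    (hl2 : ∀ (D Δ : L) (a : A), bl D (op a • Δ) =
      LinearMap.lTensor L (LinearMap.mulRight k a) (bl D Δ))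
    (hr1 : ∀ (D Δ : L) (a : A), br D (a • Δ) =
      LinearMap.rTensor L (LinearMap.mulLeft k a) (br D Δ))
    (hr2 : ∀ (D Δ : L) (a : A), br D (op a • Δ) =
      LinearMap.lTensor A (ract k A L a) (br D Δ))
    -- the double Jacobi identity, componentwise (zero anchor)
    (hJ1 : ∀ D₁ D₂ D₃ : L,
      LAm k A L bl D₁ (bl D₂ D₃) + ρ31 k A L (Bm k A L br D₃ (bl D₁ D₂)) = 0)
    (hJ2 : ∀ D₁ D₂ D₃ : L,
      Bm k A L br D₁ (bl D₂ D₃) + ρ12 k A L (LAm k A L bl D₂ (bl D₃ D₁)) = 0)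
    (hJ3 : ∀ D₁ D₂ D₃ : L,
      ρ23 k A L (Bm k A L br D₂ (bl D₃ D₁))
        + ρ13 k A L (LAm k A L bl D₃ (bl D₁ D₂)) = 0) :
    (∀ X Y Z : L,
      ml k A L (bl (ml k A L (bl X Y)) Z) = ml k A L (bl X (ml k A L (bl Y Z)))) ∧
    (∀ X Y Z : L,
      - mr k A L (br (- mr k A L (br X Y)) Z)
        = - mr k A L (br X (- mr k A L (br Y Z)))) := by
  constructor
  · intro X Y Z
    have j := congrArg (Fm k A L) (hJ1 X Y Z)
    rw [map_add, map_zero, lem1 bl hl2 X (bl Y Z),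
      lem2 bl br hanti hr2 Z (bl X Y), ← sub_eq_add_neg, sub_eq_zero] at j
    exact j.symm
  · intro X Y Z
    have hXY : mr k A L (br X Y) = - mc' k A L (bl Y X) := by
      have h : (TensorProduct.comm k A L) (br X Y) = - bl Y X := by
        rw [hanti Y X, neg_neg]
      rw [mr_eq_mc'_comm, h, map_neg]
    have hYZ : mr k A L (br Y Z) = - mc' k A L (bl Z Y) := by
      have h : (TensorProduct.comm k A L) (br Y Z) = - bl Z Y := by
        rw [hanti Z Y, neg_neg]
      rw [mr_eq_mc'_comm, h, map_neg]
    rw [hXY, hYZ, neg_neg, neg_neg, lem4 bl br hanti hl1 Z (bl Y X),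
      lem3 bl br hanti hr1 X (bl Z Y), neg_neg]
    have j := congrArg (Gm k A L) (hJ3 Y X Z)
    rw [map_add, map_zero] at j
    exact eq_neg_of_add_eq_zero_right j
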